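/- Let ζ ∈ C[0,1] with ζ(0)=ζ(1)=0, ζ ≥ 0, and let E_ζ be the associated quotient metric tree. Then E_ζ contains no subset homeomorphic to a circle; consequently between any two points of E_ζ there is a unique geodesic (isometric embedding of an interval joining them). -/

import Mathlib

open Set

/-- The tree pseudometric of an excursion. -/
noncomputable def treeDist (ζ : ℝ → ℝ) (x y : ℝ) : ℝ :=
  ζ x + ζ y - 2 * sInf (ζ '' Set.uIcc x y)

/-- A map `γ : ℝ → E` is a geodesic from `x` to `y` (parameterized by arclength on
`[0, dist x y]`). -/
def IsGeodesicFromTo {E : Type*} [MetricSpace E] (γ : ℝ → E) (x y : E) : Prop :=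
  γ 0 = x ∧ γ (dist x y) = y ∧
    ∀ s ∈ Set.Icc (0:ℝ) (dist x y), ∀ t ∈ Set.Icc (0:ℝ) (dist x y),
      dist (γ s) (γ t) = |s - t|

noncomputable def mzf (ζ : ℝ → ℝ) (x y : ℝ) : ℝ := sInf (ζ '' Set.uIcc x y)

section mz
variable {ζ : ℝ → ℝ} (hc : ContinuousOn ζ (Set.Icc 0 1))

lemma uIcc_sub {x y : ℝ} (hx : x ∈ Icc (0:ℝ) 1) (hy : y ∈ Icc (0:ℝ) 1) :
    uIcc x y ⊆ Icc (0:ℝ) 1 :=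
  Set.ordConnected_Icc.uIcc_subset hx hy

include hc in
lemma mzf_isLeast {x y : ℝ} (hx : x ∈ Icc (0:ℝ) 1) (hy : y ∈ Icc (0:ℝ) 1) :
    IsLeast (ζ '' uIcc x y) (mzf ζ x y) := by
  obtain ⟨u, hu, hmin⟩ := isCompact_uIcc.exists_isMinOn ⟨x, left_mem_uIcc⟩
    (hc.mono (uIcc_sub hx hy))
  have hL : IsLeast (ζ '' uIcc x y) (ζ u) := by
    refine ⟨mem_image_of_mem _ hu, ?_⟩
    rintro _ ⟨t, ht, rfl⟩
    exact hmin ht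
  rwa [mzf, hL.csInf_eq]

include hc in
lemma mzf_le {x y t : ℝ} (hx : x ∈ Icc (0:ℝ) 1) (hy : y ∈ Icc (0:ℝ) 1)
    (ht : t ∈ uIcc x y) : mzf ζ x y ≤ ζ t :=
  (mzf_isLeast hc hx hy).2 (mem_image_of_mem _ ht)

lemma mzf_symm (ζ : ℝ → ℝ) (x y : ℝ) : mzf ζ x y = mzf ζ y x := by
  rw [mzf, mzf, uIcc_comm]

include hc in
lemma mzf_mono {x y z w : ℝ} (hz : z ∈ Icc (0:ℝ) 1) (hw : w ∈ Icc (0:ℝ) 1)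
    (h : uIcc x y ⊆ uIcc z w) : mzf ζ z w ≤ mzf ζ x y := by
  have hx : x ∈ Icc (0:ℝ) 1 := uIcc_sub hz hw (h left_mem_uIcc)
  have hy : y ∈ Icc (0:ℝ) 1 := uIcc_sub hz hw (h right_mem_uIcc)
  obtain ⟨u, hu, hu2⟩ := (mzf_isLeast hc hx hy).1
  rw [← hu2]
  exact mzf_le hc hz hw (h hu)

include hc in
lemma mzf_split {x y z : ℝ} (hx : x ∈ Icc (0:ℝ) 1) (hy : y ∈ Icc (0:ℝ) 1)
    (hz : z ∈ Icc (0:ℝ) 1) : min (mzf ζ x z) (mzf ζ z y) ≤ mzf ζ x y := by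
  obtain ⟨u, hu, hu2⟩ := (mzf_isLeast hc hx hy).1
  rw [← hu2]
  rcases uIcc_subset_uIcc_union_uIcc (b := z) hu with h | h
  · exact le_trans (min_le_left _ _) (mzf_le hc hx hz h)
  · exact le_trans (min_le_right _ _) (mzf_le hc hz hy h)

include hc in
lemma mzf_sorted {x y z : ℝ} (hx : x ∈ Icc (0:ℝ) 1) (hy : y ∈ Icc (0:ℝ) 1)
    (hz : z ∈ Icc (0:ℝ) 1) (hxy : x ≤ y) (hyz : y ≤ z) :
    mzf ζ x z = min (mzf ζ x y) (mzf ζ y z) := by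
  refine le_antisymm (le_min ?_ ?_) (mzf_split hc hx hz hy)
  · exact mzf_mono hc hx hz (uIcc_subset_uIcc left_mem_uIcc
      (by rw [mem_uIcc]; exact Or.inl ⟨hxy, le_trans hyz le_rfl⟩))
  · exact mzf_mono hc hx hz (uIcc_subset_uIcc
      (by rw [mem_uIcc]; exact Or.inl ⟨hxy, hyz⟩) right_mem_uIcc)

end mz

section mz2
variable {ζ : ℝ → ℝ} (hc : ContinuousOn ζ (Set.Icc 0 1))

lemma arith1 (p q r : ℝ) : min (min p q + min q r) (min p (min q r) + q) ≤ p + r := by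
  rcases le_total p q with h1 | h1 <;> rcases le_total q r with h2 | h2 <;>
    simp only [min_def] <;> split_ifs <;> linarith

lemma arith2 (p q r : ℝ) : min (p + r) (min p (min q r) + q) ≤ min p q + min q r := by
  rcases le_total p q with h1 | h1 <;> rcases le_total q r with h2 | h2 <;>
    simp only [min_def] <;> split_ifs <;> linarith

lemma arith3 (p q r : ℝ) : min (p + r) (min p q + min q r) ≤ min p (min q r) + q := by
  rcases le_total p q with h1 | h1 <;> rcases le_total q r with h2 | h2 <;>
    simp only [min_def] <;> split_ifs <;> linarith

include hc in
lemma mzf_four_main {x y z w : ℝ} (hx : x ∈ Icc (0:ℝ) 1) (hy : y ∈ Icc (0:ℝ) 1)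
    (hz : z ∈ Icc (0:ℝ) 1) (hw : w ∈ Icc (0:ℝ) 1)
    (hxy : x ≤ y) (hzw : z ≤ w) (hxz : x ≤ z) :
    min (mzf ζ x z + mzf ζ y w) (mzf ζ x w + mzf ζ y z) ≤ mzf ζ x y + mzf ζ z w := by
  rcases le_total y z with hyz | hzy
  · -- x ≤ y ≤ z ≤ w
    have e1 : mzf ζ x z = min (mzf ζ x y) (mzf ζ y z) := mzf_sorted hc hx hy hz hxy hyz
    have e2 : mzf ζ y w = min (mzf ζ y z) (mzf ζ z w) := mzf_sorted hc hy hz hw hyz hzw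
    have e3 : mzf ζ x w = min (mzf ζ x y) (mzf ζ y w) :=
      mzf_sorted hc hx hy hw hxy (le_trans hyz hzw)
    rw [e3, e1, e2]
    exact arith1 _ _ _
  · rcases le_total y w with hyw | hwy
    · -- x ≤ z ≤ y ≤ w
      have e1 : mzf ζ x y = min (mzf ζ x z) (mzf ζ z y) := mzf_sorted hc hx hz hy hxz hzy
      have e2 : mzf ζ z w = min (mzf ζ z y) (mzf ζ y w) := mzf_sorted hc hz hy hw hzy hyw
      have e3 : mzf ζ x w = min (mzf ζ x z) (mzf ζ z w) := mzf_sorted hc hx hz hw hxz hzw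
      rw [e1, e2, e3, e2, mzf_symm ζ y z]
      exact arith2 _ _ _
    · -- x ≤ z ≤ w ≤ y
      have hzwy : z ≤ y := le_trans hzw hwy
      have e1 : mzf ζ x y = min (mzf ζ x z) (mzf ζ z y) := mzf_sorted hc hx hz hy hxz hzwy
      have e2 : mzf ζ z y = min (mzf ζ z w) (mzf ζ w y) := mzf_sorted hc hz hw hy hzw hwy
      have e3 : mzf ζ x w = min (mzf ζ x z) (mzf ζ z w) := mzf_sorted hc hx hz hw hxz hzw
      rw [e1, e2, e3, mzf_symm ζ y w, mzf_symm ζ y z, e2]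
      exact arith3 _ _ _

include hc in
lemma mzf_four {x y z w : ℝ} (hx : x ∈ Icc (0:ℝ) 1) (hy : y ∈ Icc (0:ℝ) 1)
    (hz : z ∈ Icc (0:ℝ) 1) (hw : w ∈ Icc (0:ℝ) 1) :
    min (mzf ζ x z + mzf ζ y w) (mzf ζ x w + mzf ζ y z) ≤ mzf ζ x y + mzf ζ z w := by
  -- reduce to x ≤ y
  have main2 : ∀ x y z w : ℝ, x ∈ Icc (0:ℝ) 1 → y ∈ Icc (0:ℝ) 1 → z ∈ Icc (0:ℝ) 1 →
      w ∈ Icc (0:ℝ) 1 → x ≤ y → z ≤ w →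
      min (mzf ζ x z + mzf ζ y w) (mzf ζ x w + mzf ζ y z) ≤ mzf ζ x y + mzf ζ z w := by
    intro x y z w hx hy hz hw hxy hzw
    rcases le_total x z with h | h
    · exact mzf_four_main hc hx hy hz hw hxy hzw h
    · have := mzf_four_main hc hz hw hx hy hzw hxy h
      rw [mzf_symm ζ z x, mzf_symm ζ w y, mzf_symm ζ z y, mzf_symm ζ w x] at this
      calc min (mzf ζ x z + mzf ζ y w) (mzf ζ x w + mzf ζ y z)
          = min (mzf ζ x z + mzf ζ y w) (mzf ζ y z + mzf ζ x w) := by rw [add_comm (mzf ζ x w)]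
        _ ≤ mzf ζ z w + mzf ζ x y := this
        _ = mzf ζ x y + mzf ζ z w := add_comm _ _
  have main3 : ∀ x y z w : ℝ, x ∈ Icc (0:ℝ) 1 → y ∈ Icc (0:ℝ) 1 → z ∈ Icc (0:ℝ) 1 →
      w ∈ Icc (0:ℝ) 1 → x ≤ y →
      min (mzf ζ x z + mzf ζ y w) (mzf ζ x w + mzf ζ y z) ≤ mzf ζ x y + mzf ζ z w := by
    intro x y z w hx hy hz hw hxy
    rcases le_total z w with h | h
    · exact main2 x y z w hx hy hz hw hxy h
    · have := main2 x y w z hx hy hw hz hxy h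
      rw [mzf_symm ζ w z] at this
      calc min (mzf ζ x z + mzf ζ y w) (mzf ζ x w + mzf ζ y z)
          = min (mzf ζ x w + mzf ζ y z) (mzf ζ x z + mzf ζ y w) := min_comm _ _
        _ ≤ mzf ζ x y + mzf ζ z w := this
  rcases le_total x y with h | h
  · exact main3 x y z w hx hy hz hw h
  · have := main3 y x z w hy hx hz hw h
    rw [mzf_symm ζ y x] at this
    rw [min_comm, add_comm (mzf ζ x w) (mzf ζ y z), add_comm (mzf ζ x z) (mzf ζ y w)]
    exact this

include hc in
lemma mzf_between_unique {x y z z' : ℝ}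
    (hx : x ∈ Icc (0:ℝ) 1) (hy : y ∈ Icc (0:ℝ) 1) (hz : z ∈ Icc (0:ℝ) 1)
    (hz' : z' ∈ Icc (0:ℝ) 1)
    (hbz : ζ z + mzf ζ x y = mzf ζ x z + mzf ζ z y)
    (hbz' : ζ z' + mzf ζ x y = mzf ζ x z' + mzf ζ z' y)
    (heq : ζ z - 2 * mzf ζ x z = ζ z' - 2 * mzf ζ x z') :
    ζ z + ζ z' - 2 * mzf ζ z z' = 0 := by
  have hcase : ∀ w : ℝ, w ∈ Icc (0:ℝ) 1 → ζ w + mzf ζ x y = mzf ζ x w + mzf ζ w y →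
      (mzf ζ w y = ζ w ∧ mzf ζ x w = mzf ζ x y) ∨
      (mzf ζ x w = ζ w ∧ mzf ζ w y = mzf ζ x y) := by
    intro w hw hb
    have h1 : mzf ζ x w ≤ ζ w := mzf_le hc hx hw right_mem_uIcc
    have h2 : mzf ζ w y ≤ ζ w := mzf_le hc hw hy left_mem_uIcc
    have hsplit := mzf_split hc hx hy hw
    rcases le_total (mzf ζ x w) (mzf ζ w y) with h | h
    · rw [min_eq_left h] at hsplit
      left; constructor <;> linarith
    · rw [min_eq_right h] at hsplit
      right; constructor <;> linarith
  -- the mixed case, as a reusable fact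
  have mixed : ∀ w w' : ℝ, w ∈ Icc (0:ℝ) 1 → w' ∈ Icc (0:ℝ) 1 →
      (mzf ζ w y = ζ w ∧ mzf ζ x w = mzf ζ x y) →
      (mzf ζ x w' = ζ w' ∧ mzf ζ w' y = mzf ζ x y) →
      (ζ w - 2 * mzf ζ x w = ζ w' - 2 * mzf ζ x w') →
      ζ w + ζ w' - 2 * mzf ζ w w' = 0 := by
    intro w w' hw hw' hA hB he
    have h1 : mzf ζ x y ≤ ζ w := hA.2 ▸ mzf_le hc hx hw right_mem_uIcc
    have h2 : mzf ζ x y ≤ ζ w' := hB.2 ▸ mzf_le hc hw' hy left_mem_uIcc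
    have hsum : ζ w + ζ w' = 2 * mzf ζ x y := by
      rw [hA.2, hB.1] at he; linarith
    have hzw : ζ w = mzf ζ x y := by linarith
    have hzw' : ζ w' = mzf ζ x y := by linarith
    have hsp := mzf_split hc hw hw' hx
    rw [mzf_symm ζ w x, hA.2, hB.1] at hsp
    have hub : mzf ζ w w' ≤ ζ w := mzf_le hc hw hw' left_mem_uIcc
    rw [hzw', min_self] at hsp
    linarith
  rcases hcase z hz hbz with hAz | hBz <;> rcases hcase z' hz' hbz' with hAz' | hBz'
  · -- both ancestors of y
    have hzz : ζ z = ζ z' := by rw [hAz.2, hAz'.2] at heq; linarith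
    have hsp := mzf_split hc hz hz' hy
    rw [mzf_symm ζ y z', hAz.1, hAz'.1] at hsp
    have hub : mzf ζ z z' ≤ ζ z := mzf_le hc hz hz' left_mem_uIcc
    rw [min_eq_left (le_of_eq hzz)] at hsp
    linarith
  · exact mixed z z' hz hz' hAz hBz' heq
  · have := mixed z' z hz' hz hAz' hBz heq.symm
    rw [mzf_symm ζ z' z] at this
    linarith
  · -- both ancestors of x
    have hzz : ζ z = ζ z' := by rw [hBz.1, hBz'.1] at heq; linarith
    have hsp := mzf_split hc hz hz' hx
    rw [mzf_symm ζ z x, hBz.1, hBz'.1] at hsp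
    have hub : mzf ζ z z' ≤ ζ z := mzf_le hc hz hz' left_mem_uIcc
    rw [min_eq_left (le_of_eq hzz)] at hsp
    linarith

end mz2

/-- The first-passage map used to build ancestral geodesic legs. -/
lemma legP {ζ : ℝ → ℝ} {a b : ℝ} (hc : ContinuousOn ζ (Icc a b)) (hab : a ≤ b)
    {u₀ : ℝ} (hu₀ : u₀ ∈ Icc a b) (hmin : ∀ t ∈ Icc a b, ζ u₀ ≤ ζ t) :
    ∃ P : ℝ → ℝ, P (ζ a) = a ∧ ∀ h ∈ Icc (ζ u₀) (ζ a),
      P h ∈ Icc a b ∧ ζ (P h) = h ∧ ∀ t, a ≤ t → t < P h → h < ζ t := by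
  classical
  set B : ℝ → Set ℝ := fun h => {t | t ∈ Icc a b ∧ ζ t ≤ h} with hB
  set P : ℝ → ℝ := fun h => sInf (B h) with hP
  have hBclosed : ∀ h, IsClosed (B h) := by
    intro h
    have : B h = Icc a b ∩ ζ ⁻¹' (Iic h) := rfl
    rw [this]
    exact hc.preimage_isClosed_of_isClosed isClosed_Icc isClosed_Iic
  have hBdd : ∀ h, BddBelow (B h) := fun h =>
    (bddBelow_Icc (a := b) (b := a)).mono (fun t ht => ht.1)
  have hmem : ∀ h, ζ u₀ ≤ h → P h ∈ B h := by
    intro h hh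
    exact (hBclosed h).csInf_mem ⟨u₀, hu₀, le_trans le_rfl hh⟩ (hBdd h)
  have hbelow : ∀ h, ζ u₀ ≤ h → ∀ t, a ≤ t → t < P h → h < ζ t := by
    intro h hh t hat htP
    by_contra hle
    push_neg at hle
    have htb : t ≤ b := le_trans (le_of_lt htP) (hmem h hh).1.2
    have : P h ≤ t := csInf_le (hBdd h) ⟨⟨hat, htb⟩, hle⟩
    linarith
  refine ⟨P, ?_, ?_⟩
  · -- P (ζ a) = a
    have ha : a ∈ B (ζ a) := ⟨⟨le_rfl, hab⟩, le_rfl⟩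
    have h1 : P (ζ a) ≤ a := csInf_le (hBdd _) ha
    have h2 : a ≤ P (ζ a) := (hmem (ζ a) (hmin a ⟨le_rfl, hab⟩)).1.1
    exact le_antisymm h1 h2
  · intro h hh
    have hm := hmem h hh.1
    refine ⟨hm.1, ?_, hbelow h hh.1⟩
    -- ζ (P h) = h
    refine le_antisymm hm.2 ?_
    rcases eq_or_lt_of_le hm.1.1 with heq | hlt
    · rw [← heq]; exact hh.2
    · -- a < P h : limit from the left
      have hne : (nhdsWithin (P h) (Ico a (P h))).NeBot := by
        rw [← mem_closure_iff_nhdsWithin_neBot, closure_Ico (ne_of_lt hlt)]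
        exact ⟨le_of_lt hlt, le_rfl⟩
      have hcw : ContinuousWithinAt ζ (Ico a (P h)) (P h) := by
        apply (hc.continuousWithinAt hm.1).mono
        intro t ht
        exact ⟨ht.1, le_trans (le_of_lt ht.2) hm.1.2⟩
      refine ge_of_tendsto hcw ?_
      filter_upwards [self_mem_nhdsWithin] with t ht
      exact le_of_lt (hbelow h hh.1 t ht.1 ht.2)

/-- Mirror version: last-passage map. -/
lemma legQ {ζ : ℝ → ℝ} {a b : ℝ} (hc : ContinuousOn ζ (Icc a b)) (hab : a ≤ b)
    {u₀ : ℝ} (hu₀ : u₀ ∈ Icc a b) (hmin : ∀ t ∈ Icc a b, ζ u₀ ≤ ζ t) :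
    ∃ Q : ℝ → ℝ, Q (ζ b) = b ∧ ∀ h ∈ Icc (ζ u₀) (ζ b),
      Q h ∈ Icc a b ∧ ζ (Q h) = h ∧ ∀ t, t ≤ b → Q h < t → h < ζ t := by
  classical
  set B : ℝ → Set ℝ := fun h => {t | t ∈ Icc a b ∧ ζ t ≤ h} with hB
  set Q : ℝ → ℝ := fun h => sSup (B h) with hQ
  have hBclosed : ∀ h, IsClosed (B h) := by
    intro h
    have : B h = Icc a b ∩ ζ ⁻¹' (Iic h) := rfl
    rw [this]
    exact hc.preimage_isClosed_of_isClosed isClosed_Icc isClosed_Iic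
  have hBdd : ∀ h, BddAbove (B h) := fun h =>
    (bddAbove_Icc (a := a) (b := b)).mono (fun t ht => ht.1)
  have hmem : ∀ h, ζ u₀ ≤ h → Q h ∈ B h := by
    intro h hh
    exact (hBclosed h).csSup_mem ⟨u₀, hu₀, le_trans le_rfl hh⟩ (hBdd h)
  have habove : ∀ h, ζ u₀ ≤ h → ∀ t, t ≤ b → Q h < t → h < ζ t := by
    intro h hh t htb hQt
    by_contra hle
    push_neg at hle
    have hat : a ≤ t := le_trans (hmem h hh).1.1 (le_of_lt hQt)
    have : t ≤ Q h := le_csSup (hBdd h) ⟨⟨hat, htb⟩, hle⟩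
    linarith
  refine ⟨Q, ?_, ?_⟩
  · have hb : b ∈ B (ζ b) := ⟨⟨hab, le_rfl⟩, le_rfl⟩
    have h1 : b ≤ Q (ζ b) := le_csSup (hBdd _) hb
    have h2 : Q (ζ b) ≤ b := (hmem (ζ b) (hmin b ⟨hab, le_rfl⟩)).1.2
    exact le_antisymm h2 h1
  · intro h hh
    have hm := hmem h hh.1
    refine ⟨hm.1, ?_, habove h hh.1⟩
    refine le_antisymm hm.2 ?_
    rcases eq_or_lt_of_le hm.1.2 with heq | hlt
    · rw [heq]; exact hh.2
    · have hne : (nhdsWithin (Q h) (Ioc (Q h) b)).NeBot := by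
        rw [← mem_closure_iff_nhdsWithin_neBot, closure_Ioc (ne_of_lt hlt)]
        exact ⟨le_rfl, le_of_lt hlt⟩
      have hcw : ContinuousWithinAt ζ (Ioc (Q h) b) (Q h) := by
        apply (hc.continuousWithinAt hm.1).mono
        intro t ht
        exact ⟨le_trans hm.1.1 (le_of_lt ht.1), ht.2⟩
      refine ge_of_tendsto hcw ?_
      filter_upwards [self_mem_nhdsWithin] with t ht
      exact le_of_lt (habove h hh.1 t ht.2 ht.1)

lemma treeDist_eq (ζ : ℝ → ℝ) (x y : ℝ) :
    treeDist ζ x y = ζ x + ζ y - 2 * mzf ζ x y := rfl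

lemma mzf_eq_of_isLeast {ζ : ℝ → ℝ} {x y c : ℝ} (h : IsLeast (ζ '' uIcc x y) c) :
    mzf ζ x y = c := h.csInf_eq


lemma exists_geodesic_le {ζ : ℝ → ℝ} (hc : ContinuousOn ζ (Set.Icc 0 1))
    {E : Type*} [MetricSpace E] {F : Set.Icc (0:ℝ) 1 → E}
    (hdist : ∀ x y : Set.Icc (0:ℝ) 1, dist (F x) (F y) = treeDist ζ x.1 y.1)
    (x y : Set.Icc (0:ℝ) 1) (hxy : x.1 ≤ y.1) :
    ∃ γ : ℝ → E, IsGeodesicFromTo γ (F x) (F y) := by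
  classical
  obtain ⟨a, ha⟩ := x
  obtain ⟨b, hb⟩ := y
  simp only at hxy ⊢
  have hsub : Icc a b ⊆ Icc (0:ℝ) 1 := Icc_subset_Icc ha.1 hb.2
  have hcab : ContinuousOn ζ (Icc a b) := hc.mono hsub
  -- minimum over [a,b]
  obtain ⟨u₀, hu₀, hmin'⟩ := isCompact_Icc.exists_isMinOn (⟨a, le_rfl, hxy⟩ : (Icc a b).Nonempty)
    hcab
  have hmin : ∀ t ∈ Icc a b, ζ u₀ ≤ ζ t := fun t ht => hmin' ht
  set m := ζ u₀ with hm
  have hmzab : mzf ζ a b = m := by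
    apply mzf_eq_of_isLeast
    rw [uIcc_of_le hxy]
    exact ⟨mem_image_of_mem _ hu₀, by rintro _ ⟨t, ht, rfl⟩; exact hmin t ht⟩
  have hma : m ≤ ζ a := hmin a ⟨le_rfl, hxy⟩
  have hmb : m ≤ ζ b := hmin b ⟨hxy, le_rfl⟩
  obtain ⟨P, hPa, hP⟩ := legP hcab hxy hu₀ hmin
  obtain ⟨Q, hQb, hQ⟩ := legQ hcab hxy hu₀ hmin
  set da := ζ a - m with hda
  set db := ζ b - m with hdb
  have hda0 : 0 ≤ da := by simp [hda]; linarith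
  have hdb0 : 0 ≤ db := by simp [hdb]; linarith
  have hdd : dist (F ⟨a, ha⟩) (F ⟨b, hb⟩) = da + db := by
    rw [hdist, treeDist_eq, hmzab]; ring
  -- inclusion back into Icc 0 1
  set inc : ℝ → (Set.Icc (0:ℝ) 1) := fun t =>
    ⟨max 0 (min 1 t), le_max_left _ _, max_le zero_le_one (min_le_left _ _)⟩ with hincdef
  have hinc : ∀ t : ℝ, t ∈ Icc (0:ℝ) 1 → (inc t).1 = t := by
    intro t ht
    simp only [hincdef]
    rw [min_eq_right ht.2, max_eq_right ht.1]
  -- heights membership facts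
  have hPmem : ∀ h ∈ Icc m (ζ a), P h ∈ Icc (0:ℝ) 1 := fun h hh => hsub (hP h hh).1
  have hQmem : ∀ h ∈ Icc m (ζ b), Q h ∈ Icc (0:ℝ) 1 := fun h hh => hsub (hQ h hh).1
  -- ordering facts
  have hPle : ∀ h₁ h₂, m ≤ h₁ → h₁ ≤ h₂ → h₂ ≤ ζ a → P h₂ ≤ P h₁ := by
    intro h₁ h₂ hm1 h12 h2a
    by_contra hlt
    push_neg at hlt
    have := (hP h₂ ⟨le_trans hm1 h12, h2a⟩).2.2 (P h₁)
      (hP h₁ ⟨hm1, le_trans h12 h2a⟩).1.1 hlt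
    rw [(hP h₁ ⟨hm1, le_trans h12 h2a⟩).2.1] at this
    linarith
  have hQle : ∀ h₁ h₂, m ≤ h₁ → h₁ ≤ h₂ → h₂ ≤ ζ b → Q h₁ ≤ Q h₂ := by
    intro h₁ h₂ hm1 h12 h2b
    by_contra hlt
    push_neg at hlt
    have := (hQ h₂ ⟨le_trans hm1 h12, h2b⟩).2.2 (Q h₁)
      (hQ h₁ ⟨hm1, le_trans h12 h2b⟩).1.2 hlt
    rw [(hQ h₁ ⟨hm1, le_trans h12 h2b⟩).2.1] at this
    linarith
  have hPu : ∀ h, m ≤ h → h ≤ ζ a → P h ≤ u₀ := by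
    intro h h1 h2
    by_contra hlt
    push_neg at hlt
    have := (hP h ⟨h1, h2⟩).2.2 u₀ hu₀.1 hlt
    linarith
  have hQu : ∀ h, m ≤ h → h ≤ ζ b → u₀ ≤ Q h := by
    intro h h1 h2
    by_contra hlt
    push_neg at hlt
    have := (hQ h ⟨h1, h2⟩).2.2 u₀ hu₀.2 hlt
    linarith
  -- the three mzf computations
  have mzPP : ∀ h₁ h₂, m ≤ h₁ → h₁ ≤ h₂ → h₂ ≤ ζ a → mzf ζ (P h₁) (P h₂) = h₁ := by
    intro h₁ h₂ hm1 h12 h2a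
    have hh₁ : h₁ ∈ Icc m (ζ a) := ⟨hm1, le_trans h12 h2a⟩
    have hh₂ : h₂ ∈ Icc m (ζ a) := ⟨le_trans hm1 h12, h2a⟩
    apply mzf_eq_of_isLeast
    constructor
    · exact ⟨P h₁, left_mem_uIcc, (hP h₁ hh₁).2.1⟩
    · rintro _ ⟨t, ht, rfl⟩
      rw [uIcc_of_ge (hPle h₁ h₂ hm1 h12 h2a)] at ht
      rcases eq_or_lt_of_le ht.2 with heq | hlt
      · rw [heq, (hP h₁ hh₁).2.1]
      · exact le_of_lt ((hP h₁ hh₁).2.2 t (le_trans (hP h₂ hh₂).1.1 ht.1) hlt)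
  have mzQQ : ∀ h₁ h₂, m ≤ h₁ → h₁ ≤ h₂ → h₂ ≤ ζ b → mzf ζ (Q h₁) (Q h₂) = h₁ := by
    intro h₁ h₂ hm1 h12 h2b
    have hh₁ : h₁ ∈ Icc m (ζ b) := ⟨hm1, le_trans h12 h2b⟩
    have hh₂ : h₂ ∈ Icc m (ζ b) := ⟨le_trans hm1 h12, h2b⟩
    apply mzf_eq_of_isLeast
    constructor
    · exact ⟨Q h₁, left_mem_uIcc, (hQ h₁ hh₁).2.1⟩
    · rintro _ ⟨t, ht, rfl⟩
      rw [uIcc_of_le (hQle h₁ h₂ hm1 h12 h2b)] at ht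
      rcases eq_or_lt_of_le ht.1 with heq | hlt
      · rw [← heq, (hQ h₁ hh₁).2.1]
      · exact le_of_lt ((hQ h₁ hh₁).2.2 t (le_trans ht.2 (hQ h₂ hh₂).1.2) hlt)
  have mzPQ : ∀ h₁ h₂, m ≤ h₁ → h₁ ≤ ζ a → m ≤ h₂ → h₂ ≤ ζ b →
      mzf ζ (P h₁) (Q h₂) = m := by
    intro h₁ h₂ ha1 ha2 hb1 hb2
    have hPQ : P h₁ ≤ Q h₂ := le_trans (hPu h₁ ha1 ha2) (hQu h₂ hb1 hb2)
    apply mzf_eq_of_isLeast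
    constructor
    · rw [uIcc_of_le hPQ]
      exact ⟨u₀, ⟨hPu h₁ ha1 ha2, hQu h₂ hb1 hb2⟩, rfl⟩
    · rintro _ ⟨t, ht, rfl⟩
      rw [uIcc_of_le hPQ] at ht
      exact hmin t ⟨le_trans (hP h₁ ⟨ha1, ha2⟩).1.1 ht.1, le_trans ht.2 (hQ h₂ ⟨hb1, hb2⟩).1.2⟩
  -- the geodesic
  set γ : ℝ → E := fun s => if s ≤ da then F (inc (P (ζ a - s))) else F (inc (Q (s - da + m)))
    with hγ
  have hsP : ∀ s, 0 ≤ s → s ≤ da → ζ a - s ∈ Icc m (ζ a) := by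
    intro s h1 h2
    constructor <;> [skip; skip] <;> simp [hda] at h2 ⊢ <;> linarith
  have hsQ : ∀ s, da ≤ s → s ≤ da + db → s - da + m ∈ Icc m (ζ b) := by
    intro s h1 h2
    constructor <;> simp [hdb] at h2 ⊢ <;> linarith
  -- distances between γ points
  have key : ∀ s t, 0 ≤ s → s ≤ t → t ≤ da + db → dist (γ s) (γ t) = t - s := by
    intro s t hs hst htd
    have hs' : 0 ≤ t := le_trans hs hst
    by_cases hsda : s ≤ da
    · by_cases htda : t ≤ da
      · -- both on first leg
        have h1 := hsP s hs hsda
        have h2 := hsP t hs' htda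
        rw [hγ]
        simp only [if_pos hsda, if_pos htda]
        rw [hdist, treeDist_eq, hinc _ (hPmem _ h1), hinc _ (hPmem _ h2),
          (hP _ h1).2.1, (hP _ h2).2.1, mzf_symm ζ (P (ζ a - s)) (P (ζ a - t)), mzPP (ζ a - t) (ζ a - s) h2.1
            (by linarith) (by linarith)]
        ring
      · -- s on first leg, t on second
        push_neg at htda
        have h1 := hsP s hs hsda
        have h2 := hsQ t (le_of_lt htda) htd
        rw [hγ]
        simp only [if_pos hsda, if_neg (not_le.mpr htda)]
        rw [hdist, treeDist_eq, hinc _ (hPmem _ h1), hinc _ (hQmem _ h2),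
          (hP _ h1).2.1, (hQ _ h2).2.1, mzPQ _ _ h1.1 h1.2 h2.1 h2.2]
        ring
    · -- both on second leg
      push_neg at hsda
      have htda : ¬ t ≤ da := fun h => absurd (le_trans hst h) (not_le.mpr hsda)
      have h1 := hsQ s (le_of_lt hsda) (le_trans hst htd)
      have h2 := hsQ t (le_of_lt (lt_of_lt_of_le hsda hst)) htd
      rw [hγ]
      simp only [if_neg (not_le.mpr hsda), if_neg htda]
      rw [hdist, treeDist_eq, hinc _ (hQmem _ h1), hinc _ (hQmem _ h2),
        (hQ _ h1).2.1, (hQ _ h2).2.1, mzQQ (s - da + m) (t - da + m) h1.1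
          (by linarith) h2.2]
      ring
  refine ⟨γ, ?_, ?_, ?_⟩
  · -- γ 0 = F x
    rw [hγ]
    simp only [if_pos hda0]
    congr 1
    apply Subtype.ext
    rw [hinc _ (by rw [sub_zero, hPa]; exact ha)]
    rw [sub_zero, hPa]
  · -- γ d = F y
    rw [hdd, hγ]
    by_cases hd : da + db ≤ da
    · -- then db = 0, ζ b = m
      have hdb0' : db = 0 := le_antisymm (by linarith) hdb0
      have hζb : ζ b = m := by simp [hdb] at hdb0'; linarith
      simp only [if_pos hd]
      apply eq_of_dist_eq_zero
      have h1 : ζ a - (da + db) ∈ Icc m (ζ a) := by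
        constructor <;> simp [hda, hdb] at * <;> linarith
      rw [hdist, treeDist_eq, hinc _ (hPmem _ h1), (hP _ h1).2.1]
      have : mzf ζ (P (ζ a - (da + db))) b = m := by
        have := mzPQ (ζ a - (da + db)) (ζ b) h1.1 h1.2 hmb le_rfl
        rwa [hQb] at this
      rw [this]
      simp only [hda, hdb]
      linarith
    · simp only [if_neg hd]
      have : da + db - da + m = ζ b := by rw [hdb]; ring
      rw [this, hQb]
      congr 1
      apply Subtype.ext
      exact hinc b hb
  · -- distance condition
    intro s hsmem t htmem
    rw [hdd] at hsmem htmem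
    rcases le_total s t with h | h
    · rw [key s t hsmem.1 h htmem.2, abs_of_nonpos (by linarith), neg_sub]
    · rw [dist_comm, key t s htmem.1 h hsmem.2, abs_of_nonneg (by linarith)]

lemma circle_arcs (u v : Circle) (huv : u ≠ v) :
    ∃ C₁ C₂ : Set Circle, IsPreconnected C₁ ∧ IsPreconnected C₂ ∧ C₁ ∪ C₂ = univ ∧
      C₁ ∩ C₂ ⊆ {u, v} ∧ u ∈ C₁ ∧ v ∈ C₁ ∧ u ∈ C₂ ∧ v ∈ C₂ := by
  classical
  have h2pi : (0:ℝ) < 2 * Real.pi := Real.two_pi_pos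
  set s : ℝ := Complex.arg u with hs
  have hexps : Circle.exp s = u := Circle.exp_arg u
  obtain ⟨k, hk, -⟩ := existsUnique_add_zsmul_mem_Ico h2pi (Complex.arg v) s
  set t : ℝ := Complex.arg v + k • (2 * Real.pi) with ht
  have hexpt : Circle.exp t = v := by
    rw [ht, zsmul_eq_mul,
      show Circle.exp (Complex.arg v + (k:ℝ) * (2*Real.pi)) = Circle.exp (Complex.arg v) from
        Circle.exp_eq_exp.2 ⟨k, rfl⟩]
    exact Circle.exp_arg v
  have hst : s < t := by
    rcases eq_or_lt_of_le hk.1 with heq | hlt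
    · exact absurd (by rw [← hexps, ← hexpt, ← heq]) huv
    · exact hlt
  have htlt : t < s + 2 * Real.pi := hk.2
  refine ⟨Circle.exp '' Icc s t, Circle.exp '' Icc t (s + 2 * Real.pi),
    isPreconnected_Icc.image _ Circle.exp.continuous.continuousOn,
    isPreconnected_Icc.image _ Circle.exp.continuous.continuousOn, ?_, ?_, ?_, ?_, ?_, ?_⟩
  · -- union is everything
    apply eq_univ_of_forall
    intro z
    obtain ⟨n, hn, -⟩ := existsUnique_add_zsmul_mem_Ico h2pi (Complex.arg z) s
    have hz : Circle.exp (Complex.arg z + n • (2 * Real.pi)) = z := by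
      rw [zsmul_eq_mul]
      rw [show Circle.exp (Complex.arg z + n * (2*Real.pi)) = Circle.exp (Complex.arg z) from
        Circle.exp_eq_exp.2 ⟨n, rfl⟩]
      exact Circle.exp_arg z
    rcases le_total (Complex.arg z + n • (2 * Real.pi)) t with h | h
    · exact Or.inl ⟨_, ⟨hn.1, h⟩, hz⟩
    · exact Or.inr ⟨_, ⟨h, le_of_lt hn.2⟩, hz⟩
  · -- intersection
    rintro z ⟨⟨r₁, hr₁, hz₁⟩, ⟨r₂, hr₂, hz₂⟩⟩
    obtain ⟨n, hn⟩ := Circle.exp_eq_exp.1 (hz₁.trans hz₂.symm)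
    have hb1 : (n:ℝ) * (2 * Real.pi) ≤ 0 := by
      have := hr₁.2; have := hr₂.1; linarith [hn]
    have hb2 : -(2 * Real.pi) ≤ (n:ℝ) * (2 * Real.pi) := by
      have := hr₁.1; have := hr₂.2; linarith [hn]
    have hn0 : (n:ℝ) ≤ 0 := by nlinarith
    have hn1 : (-1:ℝ) ≤ (n:ℝ) := by nlinarith
    have hn0' : n ≤ 0 := by exact_mod_cast hn0
    have hn1' : (-1:ℤ) ≤ n := by exact_mod_cast hn1
    interval_cases n
    · -- n = -1 : z = u
      left
      have : r₁ = s := by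
        have := hr₁.1; have := hr₂.2
        simp only [Int.cast_neg, Int.cast_one] at hn
        linarith
      rw [← hz₁, this, hexps]
    · -- n = 0 : z = v
      right
      have : r₁ = t := by
        have := hr₁.2; have := hr₂.1
        simp only [Int.cast_zero] at hn
        linarith
      simp only [mem_singleton_iff, ← hz₁, this, hexpt]
  · exact ⟨s, ⟨le_rfl, le_of_lt hst⟩, hexps⟩
  · exact ⟨t, ⟨le_of_lt hst, le_rfl⟩, hexpt⟩
  · exact ⟨s + 2 * Real.pi, ⟨le_of_lt htlt, le_rfl⟩, by rw [Circle.exp_add_two_pi, hexps]⟩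
  · exact ⟨t, ⟨le_rfl, le_of_lt htlt⟩, hexpt⟩

/-- The metric tree `E_ζ` encoded by a continuous nonnegative excursion `ζ` (realized as a
metric space `E` with surjection `F : [0,1] → E` inducing the tree pseudometric) contains
no subset homeomorphic to a circle, and between any two of its points there is a unique
geodesic. -/
theorem treeSpace_acyclic_unique_geodesics (ζ : ℝ → ℝ)
    (hc : ContinuousOn ζ (Set.Icc 0 1))
    (h0 : ζ 0 = 0) (h1 : ζ 1 = 0)
    (hnn : ∀ x ∈ Set.Icc (0:ℝ) 1, 0 ≤ ζ x)
    (E : Type*) [MetricSpace E] (F : Set.Icc (0:ℝ) 1 → E)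
    (hsurj : Function.Surjective F)
    (hdist : ∀ x y : Set.Icc (0:ℝ) 1, dist (F x) (F y) = treeDist ζ x.1 y.1) :
    (∀ S : Set E, ¬ Nonempty (S ≃ₜ Circle)) ∧
    ∀ x y : E,
      (∃ γ : ℝ → E, IsGeodesicFromTo γ x y) ∧
      ∀ γ₁ γ₂ : ℝ → E, IsGeodesicFromTo γ₁ x y → IsGeodesicFromTo γ₂ x y →
        ∀ t ∈ Set.Icc (0:ℝ) (dist x y), γ₁ t = γ₂ t := by
  classical
  -- geodesic existence
  have exgeo : ∀ x y : E, ∃ γ : ℝ → E, IsGeodesicFromTo γ x y := by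
    intro x y
    obtain ⟨xb, rfl⟩ := hsurj x
    obtain ⟨yb, rfl⟩ := hsurj y
    rcases le_total xb.1 yb.1 with h | h
    · exact exists_geodesic_le hc hdist xb yb h
    · obtain ⟨γ, hγ0, hγd, hγ⟩ := exists_geodesic_le hc hdist yb xb h
      have hdc : dist (F yb) (F xb) = dist (F xb) (F yb) := dist_comm _ _
      refine ⟨fun s => γ (dist (F xb) (F yb) - s), ?_, ?_, ?_⟩
      · simp only [sub_zero]
        rw [← hdc]
        exact hγd
      · simp only [sub_self]
        exact hγ0
      · intro s hs t ht
        show dist (γ (dist (F xb) (F yb) - s)) (γ (dist (F xb) (F yb) - t)) = |s - t|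
        have h1 := hγ (dist (F xb) (F yb) - s)
          ⟨by linarith [hs.2], by rw [hdc]; linarith [hs.1]⟩
          (dist (F xb) (F yb) - t)
          ⟨by linarith [ht.2], by rw [hdc]; linarith [ht.1]⟩
        rw [h1, show (dist (F xb) (F yb) - s) - (dist (F xb) (F yb) - t) = t - s by ring]
        exact abs_sub_comm t s
  -- uniqueness of metric midpoints
  have ebetw : ∀ a b c c' : E, dist a c + dist c b = dist a b →
      dist a c' + dist c' b = dist a b → dist a c = dist a c' → c = c' := by
    intro a b c c' hb1 hb2 hb3
    obtain ⟨ab, rfl⟩ := hsurj a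
    obtain ⟨bb, rfl⟩ := hsurj b
    obtain ⟨cb, rfl⟩ := hsurj c
    obtain ⟨cb', rfl⟩ := hsurj c'
    simp only [hdist, treeDist_eq] at hb1 hb2 hb3
    apply eq_of_dist_eq_zero
    rw [hdist, treeDist_eq]
    have hbz : ζ cb.1 + mzf ζ ab.1 bb.1 = mzf ζ ab.1 cb.1 + mzf ζ cb.1 bb.1 := by linarith
    have hbz' : ζ cb'.1 + mzf ζ ab.1 bb.1 = mzf ζ ab.1 cb'.1 + mzf ζ cb'.1 bb.1 := by linarith
    have heq : ζ cb.1 - 2 * mzf ζ ab.1 cb.1 = ζ cb'.1 - 2 * mzf ζ ab.1 cb'.1 := by linarith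
    have := mzf_between_unique hc ab.2 bb.2 cb.2 cb'.2 hbz hbz' heq
    linarith
  -- 0-hyperbolicity (Gromov product inequality) at any basepoint
  have grom : ∀ p x y z : E,
      min (dist x p + dist z p - dist x z) (dist z p + dist y p - dist z y) ≤
        dist x p + dist y p - dist x y := by
    intro p x y z
    obtain ⟨pb, rfl⟩ := hsurj p
    obtain ⟨xb, rfl⟩ := hsurj x
    obtain ⟨yb, rfl⟩ := hsurj y
    obtain ⟨zb, rfl⟩ := hsurj z
    have h4 := mzf_four hc xb.2 yb.2 zb.2 pb.2
    simp only [hdist, treeDist_eq]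
    have s1 := mzf_symm ζ yb.1 zb.1
    rcases min_le_iff.1 h4 with h | h
    · refine le_trans (min_le_left _ _) ?_
      linarith
    · refine le_trans (min_le_right _ _) ?_
      linarith
  refine ⟨?_, ?_⟩
  · -- acyclicity
    intro S hS
    obtain ⟨e⟩ := hS
    have hpi := Real.pi_pos
    have hune : Circle.exp 0 ≠ Circle.exp Real.pi := by
      intro h
      obtain ⟨m, hm⟩ := Circle.exp_eq_exp.1 h
      have hz : Real.pi * (1 + 2 * (m:ℝ)) = 0 := by linear_combination -hm
      rcases mul_eq_zero.1 hz with h' | h'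
      · linarith
      · have : (1 + 2*m : ℤ) = 0 := by exact_mod_cast h'
        omega
    set a : S := e.symm (Circle.exp 0) with hadef
    set b : S := e.symm (Circle.exp Real.pi) with hbdef
    have hab : a ≠ b := fun h => hune (e.symm.injective h)
    have havb : (a : E) ≠ (b : E) := fun h => hab (Subtype.ext h)
    obtain ⟨γ, hγ0, hγd, hγ⟩ := exgeo (a : E) (b : E)
    set d : ℝ := dist (a : E) (b : E) with hddef
    have hd : 0 < d := by rw [hddef]; exact dist_pos.2 havb
    have hmem2 : d / 2 ∈ Icc (0:ℝ) d := ⟨by linarith, by linarith⟩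
    have e1 : dist (a : E) (γ (d/2)) = d / 2 := by
      rw [← hγ0, hγ 0 ⟨le_rfl, by linarith⟩ (d/2) hmem2, zero_sub, abs_neg,
        abs_of_nonneg (by linarith)]
    have e2 : dist (γ (d/2)) (b : E) = d / 2 := by
      rw [← hγd, hγ (d/2) hmem2 d ⟨by linarith, le_rfl⟩, abs_of_nonpos (by linarith), neg_sub]
      ring
    set p : E := γ (d/2) with hpdef
    have hpa : p ≠ (a : E) := by
      intro h
      rw [h, dist_self] at e1
      linarith
    have hpb : p ≠ (b : E) := by
      intro h
      rw [h, dist_self] at e2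
      linarith
    have hUopen : IsOpen {w : E | w ≠ p ∧ 0 < dist w p + dist (a:E) p - dist w (a:E)} := by
      rw [Metric.isOpen_iff]
      intro w hw
      refine ⟨min (dist w p) (dist w p + dist (a:E) p - dist w (a:E)),
        lt_min (dist_pos.2 hw.1) hw.2, ?_⟩
      intro w' hw'
      rw [Metric.mem_ball] at hw'
      have hww' : dist w' w < dist w p := lt_of_lt_of_le hw' (min_le_left _ _)
      have hne : w' ≠ p := by
        intro h
        rw [h, dist_comm p w] at hww'
        exact lt_irrefl _ hww'
      refine ⟨hne, ?_⟩
      have hg := grom p w' (a : E) w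
      have hwp' : dist w p ≤ dist w w' + dist w' p := dist_triangle _ _ _
      have hcm : dist w w' = dist w' w := dist_comm _ _
      have harg1 : 0 < dist w' p + dist w p - dist w' w := by linarith
      exact lt_of_lt_of_le (lt_min harg1 hw.2) hg
    have hVopen : IsOpen {w : E | w ≠ p ∧ dist w p + dist (a:E) p - dist w (a:E) ≤ 0} := by
      rw [Metric.isOpen_iff]
      intro w hw
      refine ⟨dist w p, dist_pos.2 hw.1, ?_⟩
      intro w' hw'
      rw [Metric.mem_ball] at hw'
      have hne : w' ≠ p := by
        intro h
        rw [h, dist_comm p w] at hw'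
        exact lt_irrefl _ hw'
      refine ⟨hne, ?_⟩
      by_contra hpos
      push_neg at hpos
      have hg := grom p w (a : E) w'
      have hwp' : dist w p ≤ dist w w' + dist w' p := dist_triangle _ _ _
      have hcm : dist w w' = dist w' w := dist_comm _ _
      have harg1 : 0 < dist w p + dist w' p - dist w w' := by linarith
      have := lt_of_lt_of_le (lt_min harg1 hpos) hg
      linarith [hw.2]
    obtain ⟨C₁, C₂, hC₁, hC₂, hunion, hinter, huC₁, hvC₁, huC₂, hvC₂⟩ :=
      circle_arcs (e a) (e b) (fun h => hab (e.injective h))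
    have hpA : ∀ C : Set Circle, IsPreconnected C → e a ∈ C → e b ∈ C →
        p ∈ Subtype.val '' (e.symm '' C) := by
      intro C hpre haC hbC
      by_contra hp
      have hApre : IsPreconnected (Subtype.val '' (e.symm '' C)) :=
        (hpre.image _ e.symm.continuous.continuousOn).image _
          continuous_subtype_val.continuousOn
      have haA : (a : E) ∈ Subtype.val '' (e.symm '' C) :=
        ⟨e.symm (e a), mem_image_of_mem _ haC, by rw [Homeomorph.symm_apply_apply]⟩
      have hbA : (b : E) ∈ Subtype.val '' (e.symm '' C) :=
        ⟨e.symm (e b), mem_image_of_mem _ hbC, by rw [Homeomorph.symm_apply_apply]⟩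
      have hsubUV : Subtype.val '' (e.symm '' C) ⊆
          {w : E | w ≠ p ∧ 0 < dist w p + dist (a:E) p - dist w (a:E)} ∪
          {w : E | w ≠ p ∧ dist w p + dist (a:E) p - dist w (a:E) ≤ 0} := by
        intro q hq
        have hqp : q ≠ p := fun h => hp (h ▸ hq)
        rcases le_or_gt (dist q p + dist (a:E) p - dist q (a:E)) 0 with h' | h'
        · exact Or.inr ⟨hqp, h'⟩
        · exact Or.inl ⟨hqp, h'⟩
      have haU : (a : E) ∈ {w : E | w ≠ p ∧ 0 < dist w p + dist (a:E) p - dist w (a:E)} := by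
        refine ⟨Ne.symm hpa, ?_⟩
        have hself : dist (a:E) (a:E) = 0 := dist_self _
        linarith [e1]
      have hbV : (b : E) ∈ {w : E | w ≠ p ∧ dist w p + dist (a:E) p - dist w (a:E) ≤ 0} := by
        refine ⟨Ne.symm hpb, ?_⟩
        have hc1 : dist (b:E) p = d/2 := by rw [dist_comm]; exact e2
        have hc2 : dist (b:E) (a:E) = d := by rw [dist_comm, ← hddef]
        linarith [e1]
      obtain ⟨q, hqs, hqU, hqV⟩ := hApre _ _ hUopen hVopen hsubUV
        ⟨(a:E), haA, haU⟩ ⟨(b:E), hbA, hbV⟩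
      have h1' := hqU.2
      have h2' := hqV.2
      linarith
    have hp1 := hpA C₁ hC₁ huC₁ hvC₁
    have hp2 := hpA C₂ hC₂ huC₂ hvC₂
    obtain ⟨s₁, hs₁, hps₁⟩ := hp1
    obtain ⟨s₂, hs₂, hps₂⟩ := hp2
    have hss : s₁ = s₂ := Subtype.ext (hps₁.trans hps₂.symm)
    have hc1' : e s₁ ∈ C₁ := by
      obtain ⟨c, hcC, hce⟩ := hs₁
      rw [← hce, Homeomorph.apply_symm_apply]
      exact hcC
    have hc2' : e s₁ ∈ C₂ := by
      rw [hss]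
      obtain ⟨c, hcC, hce⟩ := hs₂
      rw [← hce, Homeomorph.apply_symm_apply]
      exact hcC
    rcases hinter ⟨hc1', hc2'⟩ with h' | h'
    · have hsa : s₁ = a := e.injective h'
      exact hpa (by rw [← hps₁, hsa])
    · have hsb : s₁ = b := e.injective (mem_singleton_iff.1 h')
      exact hpb (by rw [← hps₁, hsb])
  · -- uniqueness of geodesics
    intro x y
    refine ⟨exgeo x y, ?_⟩
    intro γ₁ γ₂ h₁ h₂ t ht
    have hd0 : (0:ℝ) ≤ dist x y := dist_nonneg
    have c10 : dist x (γ₁ t) = t := by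
      rw [← h₁.1, h₁.2.2 0 ⟨le_rfl, hd0⟩ t ht, zero_sub, abs_neg, abs_of_nonneg ht.1]
    have c1d : dist (γ₁ t) y = dist x y - t := by
      have hh := h₁.2.2 t ht (dist x y) ⟨hd0, le_rfl⟩
      rw [h₁.2.1] at hh
      rw [hh, abs_of_nonpos (by linarith [ht.2]), neg_sub]
    have c20 : dist x (γ₂ t) = t := by
      rw [← h₂.1, h₂.2.2 0 ⟨le_rfl, hd0⟩ t ht, zero_sub, abs_neg, abs_of_nonneg ht.1]
    have c2d : dist (γ₂ t) y = dist x y - t := by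
      have hh := h₂.2.2 t ht (dist x y) ⟨hd0, le_rfl⟩
      rw [h₂.2.1] at hh
      rw [hh, abs_of_nonpos (by linarith [ht.2]), neg_sub]
    exact ebetw x y (γ₁ t) (γ₂ t) (by rw [c10, c1d]; ring) (by rw [c20, c2d]; ring)
      (by rw [c10, c20])
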